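/- Let n ≥ 3 and suppose p, q are distinct integers such that some permutation π of {1,...,n} has {D(π)_i : 1 ≤ i ≤ n−1} = {p, q}. Then p and q have opposite signs and gcd(p, q) = 1. -/

import Mathlib

/-- If n ≥ 3 and the set of derivative values of a permutation of {1,...,n} is exactly {p,q}
with p ≠ q, then p and q have opposite signs and are relatively prime. -/
theorem D_pair_opposite_signs_coprime (n : ℕ) (hn : 3 ≤ n) (p q : ℤ) (hpq : p ≠ q)
    (π : ℕ → ℤ) (hπ : Set.BijOn π (Set.Icc 1 n) (Set.Icc 1 (n : ℤ)))
    (hD : {d : ℤ | ∃ i : ℕ, 1 ≤ i ∧ i < n ∧ d = π (i + 1) - π i} = {p, q}) :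
    p * q < 0 ∧ Int.gcd p q = 1 := by
  have hmem : ∀ i : ℕ, 1 ≤ i → i < n → π (i+1) - π i = p ∨ π (i+1) - π i = q := by
    intro i h1 h2
    have : π (i+1) - π i ∈ ({p, q} : Set ℤ) := by
      rw [← hD]; exact ⟨i, h1, h2, rfl⟩
    simpa using this
  have hpw : ∃ i : ℕ, 1 ≤ i ∧ i < n ∧ p = π (i+1) - π i := by
    have : p ∈ ({p, q} : Set ℤ) := by simp
    rwa [← hD] at this
  have hqw : ∃ i : ℕ, 1 ≤ i ∧ i < n ∧ q = π (i+1) - π i := by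
    have : q ∈ ({p, q} : Set ℤ) := by simp
    rwa [← hD] at this
  have hnz : ∀ i : ℕ, 1 ≤ i → i < n → π (i+1) ≠ π i := by
    intro i h1 h2 heq
    have hi : i ∈ Set.Icc 1 n := ⟨h1, le_of_lt h2⟩
    have hi1 : i+1 ∈ Set.Icc 1 n := ⟨by omega, by omega⟩
    have := hπ.injOn hi1 hi heq
    omega
  have hp0 : p ≠ 0 := by
    obtain ⟨i, h1, h2, he⟩ := hpw
    intro h
    exact hnz i h1 h2 (by omega)
  have hq0 : q ≠ 0 := by
    obtain ⟨i, h1, h2, he⟩ := hqw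
    intro h
    exact hnz i h1 h2 (by omega)
  have htel : ∀ m : ℕ, 1 ≤ m → ∑ i ∈ Finset.Ico 1 m, (π (i+1) - π i) = π m - π 1 := by
    intro m hm
    induction m with
    | zero => omega
    | succ k ih =>
      rcases Nat.eq_or_lt_of_le hm with h | h
      · have hk : k = 0 := by omega
        subst hk; simp
      · have hk : 1 ≤ k := by omega
        rw [Finset.sum_Ico_succ_top hk, ih hk]
        ring
  have hsum := htel n (by omega)
  have hπ1 : π 1 ∈ Set.Icc 1 (n:ℤ) := hπ.mapsTo ⟨le_refl 1, by omega⟩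
  have hπn : π n ∈ Set.Icc 1 (n:ℤ) := hπ.mapsTo ⟨by omega, le_refl n⟩
  obtain ⟨hπ1a, hπ1b⟩ := hπ1
  obtain ⟨hπna, hπnb⟩ := hπn
  have hcard : ∑ _i ∈ Finset.Ico 1 n, (1:ℤ) = (n:ℤ) - 1 := by
    simp [Nat.card_Ico]
    omega
  have hnotpos : ¬ (0 < p ∧ 0 < q) := by
    rintro ⟨hp, hq⟩
    have h1 : ∀ i ∈ Finset.Ico 1 n, (1:ℤ) ≤ π (i+1) - π i := by
      intro i hi
      simp only [Finset.mem_Ico] at hi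
      rcases hmem i hi.1 hi.2 with h | h <;> omega
    have h2 : ∃ i ∈ Finset.Ico 1 n, (1:ℤ) < π (i+1) - π i := by
      rcases lt_or_gt_of_ne hpq with h | h
      · obtain ⟨i, a, b, e⟩ := hqw
        exact ⟨i, Finset.mem_Ico.mpr ⟨a, b⟩, by omega⟩
      · obtain ⟨i, a, b, e⟩ := hpw
        exact ⟨i, Finset.mem_Ico.mpr ⟨a, b⟩, by omega⟩
    have := Finset.sum_lt_sum h1 h2
    rw [hsum, hcard] at this
    omega
  have hnotneg : ¬ (p < 0 ∧ q < 0) := by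
    rintro ⟨hp, hq⟩
    have h1 : ∀ i ∈ Finset.Ico 1 n, π (i+1) - π i ≤ (-1:ℤ) := by
      intro i hi
      simp only [Finset.mem_Ico] at hi
      rcases hmem i hi.1 hi.2 with h | h <;> omega
    have h2 : ∃ i ∈ Finset.Ico 1 n, π (i+1) - π i < (-1:ℤ) := by
      rcases lt_or_gt_of_ne hpq with h | h
      · obtain ⟨i, a, b, e⟩ := hpw
        exact ⟨i, Finset.mem_Ico.mpr ⟨a, b⟩, by omega⟩
      · obtain ⟨i, a, b, e⟩ := hqw
        exact ⟨i, Finset.mem_Ico.mpr ⟨a, b⟩, by omega⟩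
    have := Finset.sum_lt_sum h1 h2
    have hc : ∑ _i ∈ Finset.Ico 1 n, (-1:ℤ) = -((n:ℤ) - 1) := by
      simp [Nat.card_Ico]
      omega
    rw [hsum, hc] at this
    omega
  constructor
  · rcases lt_trichotomy p 0 with hp | hp | hp
    · rcases lt_trichotomy q 0 with hq | hq | hq
      · exact absurd ⟨hp, hq⟩ hnotneg
      · exact absurd hq hq0
      · exact mul_neg_of_neg_of_pos hp hq
    · exact absurd hp hp0
    · rcases lt_trichotomy q 0 with hq | hq | hq
      · exact mul_neg_of_pos_of_neg hp hq
      · exact absurd hq hq0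
      · exact absurd ⟨hp, hq⟩ hnotpos
  · have hdvd : ∀ i, 1 ≤ i → i ≤ n → (Int.gcd p q : ℤ) ∣ π i - π 1 := by
      intro i h1 h2
      induction i with
      | zero => omega
      | succ k ih =>
        rcases Nat.lt_or_ge 1 (k+1) with h | h
        · have hk1 : 1 ≤ k := by omega
          have hkn : k < n := by omega
          have ihk := ih hk1 (by omega)
          have hd : (Int.gcd p q : ℤ) ∣ π (k+1) - π k := by
            rcases hmem k hk1 hkn with h | h
            · rw [h]; exact Int.gcd_dvd_left p q
            · rw [h]; exact Int.gcd_dvd_right p q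
          have he : π (k+1) - π 1 = (π (k+1) - π k) + (π k - π 1) := by ring
          rw [he]
          exact dvd_add hd ihk
        · have hk : k + 1 = 1 := by omega
          rw [hk]; simp
    obtain ⟨a, ha, hae⟩ := hπ.surjOn (⟨le_refl 1, by omega⟩ : (1:ℤ) ∈ Set.Icc 1 (n:ℤ))
    obtain ⟨b, hb, hbe⟩ := hπ.surjOn (⟨by omega, by omega⟩ : (2:ℤ) ∈ Set.Icc 1 (n:ℤ))
    have hda := hdvd a ha.1 ha.2
    have hdb := hdvd b hb.1 hb.2
    have h1 : (Int.gcd p q : ℤ) ∣ 1 := by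
      have : (1:ℤ) = (π b - π 1) - (π a - π 1) := by rw [hae, hbe]; ring
      rw [this]
      exact dvd_sub hdb hda
    have := Int.ofNat_dvd.mp (by exact_mod_cast h1)
    exact Nat.dvd_one.mp this
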